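/- Let N be Hermitian, M Hermitian positive definite, with generalized eigenvalues λ₁ ≥ … ≥ λ_n of Nx = λMx and eigenvector x₁ for λ₁. For a subspace W, let θ₁ be the largest Ritz value of (N,M) with respect to W. Then λ₁ − θ₁ ≤ (λ₁ − λ_n) · sin_M²(W, x₁). -/

import Mathlib

open Matrix
open scoped ComplexOrder ComplexInnerProductSpace

noncomputable section

/-- The Rayleigh quotient of the pencil `(N, M)` at `w`, in Euclidean form. -/
def rayleighE {n : ℕ} (N M : Matrix (Fin n) (Fin n) ℂ) (w : EuclideanSpace ℂ (Fin n)) : ℝ :=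
  (⟪w, Matrix.toEuclideanLin N w⟫).re / (⟪w, Matrix.toEuclideanLin M w⟫).re

/-- `sin_M²(W, x) = 1 − ‖P x̂‖²` where `x̂ = Lx/‖Lx‖` and `P` is the orthogonal
projection onto `L·W`, for `M = L²`. -/
def sinM2sub {n : ℕ} (L : Matrix (Fin n) (Fin n) ℂ)
    (W : Submodule ℂ (EuclideanSpace ℂ (Fin n))) (x : EuclideanSpace ℂ (Fin n)) : ℝ :=
  1 - ‖(Submodule.orthogonalProjectionOnto (W.map (Matrix.toEuclideanLin L))
        (‖Matrix.toEuclideanLin L x‖⁻¹ • Matrix.toEuclideanLin L x)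
      : EuclideanSpace ℂ (Fin n))‖ ^ 2

set_option maxHeartbeats 1000000 in
theorem stmt15 {n : ℕ} (N M L : Matrix (Fin n) (Fin n) ℂ)
    (hN : N.IsHermitian) (hM : M.PosDef) (hL : L.PosDef) (hML : M = L * L)
    (lam1 lamn : ℝ) (x1 : EuclideanSpace ℂ (Fin n)) (hx1 : x1 ≠ 0)
    (heig : Matrix.toEuclideanLin N x1 = (lam1 : ℂ) • Matrix.toEuclideanLin M x1)
    (hray : ∀ w : EuclideanSpace ℂ (Fin n), w ≠ 0 →
      lamn ≤ rayleighE N M w ∧ rayleighE N M w ≤ lam1)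
    (W : Submodule ℂ (EuclideanSpace ℂ (Fin n)))
    (w1 : EuclideanSpace ℂ (Fin n)) (hw1W : w1 ∈ W) (hw1 : w1 ≠ 0)
    (θ1 : ℝ) (hθ : θ1 = rayleighE N M w1)
    (hmax : ∀ w ∈ W, w ≠ 0 → rayleighE N M w ≤ θ1) :
    lam1 - θ1 ≤ (lam1 - lamn) * sinM2sub L W x1 := by
  classical
  have hLdet : IsUnit L.det := hL.det_pos.ne'.isUnit
  have hKL : L⁻¹ * L = 1 := Matrix.nonsing_inv_mul L hLdet
  have hLK : L * L⁻¹ = 1 := Matrix.mul_nonsing_inv L hLdet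
  have hmulE : ∀ (A B : Matrix (Fin n) (Fin n) ℂ) (x : EuclideanSpace ℂ (Fin n)),
      Matrix.toEuclideanLin (A * B) x
        = Matrix.toEuclideanLin A (Matrix.toEuclideanLin B x) := by
    intro A B x
    simp [Matrix.toEuclideanLin_apply, Matrix.mulVec_mulVec]
  have hKLx : ∀ x, Matrix.toEuclideanLin L⁻¹ (Matrix.toEuclideanLin L x) = x := by
    intro x
    rw [← hmulE, hKL]
    simp [Matrix.toEuclideanLin_apply]
  have hLKx : ∀ x, Matrix.toEuclideanLin L (Matrix.toEuclideanLin L⁻¹ x) = x := by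
    intro x
    rw [← hmulE, hLK]
    simp [Matrix.toEuclideanLin_apply]
  have hLsym := Matrix.isHermitian_iff_isSymmetric.1 hL.isHermitian
  have hNsym := Matrix.isHermitian_iff_isSymmetric.1 hN
  have hKsym := Matrix.isHermitian_iff_isSymmetric.1 hL.isHermitian.inv
  have hTM : ∀ x, Matrix.toEuclideanLin M x
      = Matrix.toEuclideanLin L (Matrix.toEuclideanLin L x) := by
    intro x; rw [hML]; exact hmulE _ _ x
  -- the transformed operator A z = L⁻¹ N L⁻¹ z
  set A : EuclideanSpace ℂ (Fin n) → EuclideanSpace ℂ (Fin n) :=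
    fun z => Matrix.toEuclideanLin L⁻¹
      (Matrix.toEuclideanLin N (Matrix.toEuclideanLin L⁻¹ z)) with hA
  have hinner : ∀ z : EuclideanSpace ℂ (Fin n),
      ⟪z, A z⟫ = ⟪Matrix.toEuclideanLin L⁻¹ z,
        Matrix.toEuclideanLin N (Matrix.toEuclideanLin L⁻¹ z)⟫ := by
    intro z; exact (hKsym z _).symm
  have hAsym : ∀ a b : EuclideanSpace ℂ (Fin n), ⟪A a, b⟫ = ⟪a, A b⟫ := by
    intro a b
    simp only [hA]
    rw [hKsym, hNsym, hKsym]
  have hMre : ∀ w : EuclideanSpace ℂ (Fin n),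
      (⟪w, Matrix.toEuclideanLin M w⟫).re = ‖Matrix.toEuclideanLin L w‖ ^ 2 := by
    intro w
    rw [hTM w, ← hLsym w (Matrix.toEuclideanLin L w)]
    exact inner_self_eq_norm_sq (𝕜 := ℂ) _
  -- Rayleigh bounds for A
  have hray' : ∀ z : EuclideanSpace ℂ (Fin n), z ≠ 0 →
      lamn * ‖z‖ ^ 2 ≤ (⟪z, A z⟫).re ∧ (⟪z, A z⟫).re ≤ lam1 * ‖z‖ ^ 2 := by
    intro z hz
    set w := Matrix.toEuclideanLin L⁻¹ z with hwdef
    have hwz : Matrix.toEuclideanLin L w = z := hLKx z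
    have hw0 : w ≠ 0 := by
      intro h
      apply hz
      rw [← hwz, h, map_zero]
    have hden : (⟪w, Matrix.toEuclideanLin M w⟫).re = ‖z‖ ^ 2 := by
      rw [hMre, hwz]
    have hd0 : (0:ℝ) < ‖z‖ ^ 2 := pow_pos (norm_pos_iff.2 hz) 2
    obtain ⟨h1, h2⟩ := hray w hw0
    simp only [rayleighE] at h1 h2
    rw [hden] at h1 h2
    have hnum : (⟪w, Matrix.toEuclideanLin N w⟫).re = (⟪z, A z⟫).re := by
      rw [hinner, ← hwdef]
    rw [hnum] at h1 h2
    constructor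
    · exact (le_div_iff₀ hd0).1 h1
    · exact (div_le_iff₀ hd0).1 h2
  have hlow : ∀ z : EuclideanSpace ℂ (Fin n),
      lamn * ‖z‖ ^ 2 ≤ (⟪z, A z⟫).re := by
    intro z
    by_cases hz : z = 0
    · simp [hz, hA]
    · exact (hray' z hz).1
  -- the eigenvector in transformed coordinates
  set y : EuclideanSpace ℂ (Fin n) := Matrix.toEuclideanLin L x1 with hy
  have hy0 : y ≠ 0 := by
    intro h
    apply hx1
    have := hKLx x1
    rw [← hy, h, map_zero] at this
    exact this.symm
  have hAy : A y = (lam1 : ℂ) • y := by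
    show Matrix.toEuclideanLin L⁻¹
      (Matrix.toEuclideanLin N (Matrix.toEuclideanLin L⁻¹ y)) = (lam1 : ℂ) • y
    rw [hy, hKLx, heig, _root_.map_smul, hTM, hKLx, ← hy]
  set yh : EuclideanSpace ℂ (Fin n) := ‖y‖⁻¹ • y with hyh
  have hyn : ‖yh‖ = 1 := norm_smul_inv_norm hy0
  have hAyh : A yh = (lam1 : ℂ) • yh := by
    rw [hyh]
    show Matrix.toEuclideanLin L⁻¹
      (Matrix.toEuclideanLin N (Matrix.toEuclideanLin L⁻¹ (‖y‖⁻¹ • y)))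
      = (lam1 : ℂ) • (‖y‖⁻¹ • y)
    rw [LinearMap.map_smul_of_tower, LinearMap.map_smul_of_tower,
      LinearMap.map_smul_of_tower]
    rw [show Matrix.toEuclideanLin L⁻¹
      (Matrix.toEuclideanLin N (Matrix.toEuclideanLin L⁻¹ y)) = A y from rfl]
    rw [hAy, smul_comm]
  -- the projection
  set S : Submodule ℂ (EuclideanSpace ℂ (Fin n)) := W.map (Matrix.toEuclideanLin L) with hS
  set p : EuclideanSpace ℂ (Fin n) := (Submodule.orthogonalProjectionOnto S yh : EuclideanSpace ℂ (Fin n))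
    with hp
  have hsin : sinM2sub L W x1 = 1 - ‖p‖ ^ 2 := by
    simp only [sinM2sub]
    rfl
  have hpS : p ∈ S := SetLike.coe_mem _
  have hyp : ⟪yh, p⟫ = (‖p‖ : ℂ) ^ 2 := by
    have h0 := S.starProjection_inner_eq_zero yh p hpS
    rw [Submodule.starProjection_apply] at h0
    rw [inner_sub_left, sub_eq_zero, ← hp] at h0
    rw [h0]
    exact inner_self_eq_norm_sq_to_K p
  rw [hsin]
  by_cases hp0 : p = 0
  · -- sin² = 1; reduces to λn ≤ θ1
    rw [hp0]
    simp only [norm_zero]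
    have h1 := (hray w1 hw1).1
    rw [← hθ] at h1
    nlinarith
  · obtain ⟨w, hwW, hwp⟩ := Submodule.mem_map.1 hpS
    have hw0 : w ≠ 0 := by
      intro h; apply hp0; rw [← hwp, h, map_zero]
    have hwk : Matrix.toEuclideanLin L⁻¹ p = w := by rw [← hwp, hKLx]
    set c : ℝ := ‖p‖ ^ 2 with hc
    have hcpos : (0:ℝ) < c := by
      rw [hc]; exact pow_pos (norm_pos_iff.2 hp0) 2
    set α : ℝ := (⟪p, A p⟫).re with hα
    -- θ1 bound
    have hαθ : α ≤ θ1 * c := by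
      have hb := hmax w hwW hw0
      simp only [rayleighE] at hb
      have hden : (⟪w, Matrix.toEuclideanLin M w⟫).re = c := by
        rw [hMre, hwp, hc]
      have hnum : (⟪w, Matrix.toEuclideanLin N w⟫).re = α := by
        rw [hα, hinner, hwk]
      rw [hden, hnum] at hb
      have := (div_le_iff₀ hcpos).1 hb
      linarith
    -- inner product facts
    have f1 : ⟪yh, p⟫ = (c : ℂ) := by
      rw [hyp, hc]; norm_cast
    have f2 : ⟪p, yh⟫ = (c : ℂ) := by
      rw [← inner_conj_symm, f1, Complex.conj_ofReal]
    have f3 : ⟪yh, yh⟫ = (1 : ℂ) := by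
      have h : ⟪yh, yh⟫ = (‖yh‖ : ℂ) ^ 2 := inner_self_eq_norm_sq_to_K yh
      rw [h, hyn]; norm_num
    have f4 : ⟪yh, A p⟫ = (lam1 : ℂ) * (c : ℂ) := by
      rw [← hAsym, hAyh, inner_smul_left, f1, Complex.conj_ofReal]
    have f5 : ⟪p, A yh⟫ = (lam1 : ℂ) * (c : ℂ) := by
      rw [hAyh, inner_smul_right, f2]
    have f6 : ⟪p, p⟫ = (c : ℂ) := by
      rw [hc]; push_cast
      exact inner_self_eq_norm_sq_to_K p
    -- the orthogonal component
    set v : EuclideanSpace ℂ (Fin n) := p - (c : ℂ) • yh with hv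
    have hAv : A v = A p - (c : ℂ) • A yh := by
      rw [hv]
      simp only [hA, map_sub, _root_.map_smul]
    have hcplx : ⟪v, A v⟫ = ⟪p, A p⟫ - (lam1 : ℂ) * (c : ℂ) ^ 2 := by
      rw [hAv, hv]
      simp only [inner_sub_left, inner_sub_right, inner_smul_left,
        inner_smul_right, hAyh, f1, f2, f3, f4, Complex.conj_ofReal]
      ring
    have hvAv : (⟪v, A v⟫).re = α - lam1 * c ^ 2 := by
      rw [hcplx, show (lam1 : ℂ) * (c : ℂ) ^ 2 = ((lam1 * c ^ 2 : ℝ) : ℂ) by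
        push_cast; ring, Complex.sub_re, Complex.ofReal_re, hα]
    have hvv : ‖v‖ ^ 2 = c - c ^ 2 := by
      have hcv : ⟪v, v⟫ = ((c - c ^ 2 : ℝ) : ℂ) := by
        rw [hv]
        simp only [inner_sub_left, inner_sub_right, inner_smul_left,
          inner_smul_right, f1, f2, f3, f6, Complex.conj_ofReal]
        push_cast; ring
      have h2 : ‖v‖ ^ 2 = (⟪v, v⟫).re := (inner_self_eq_norm_sq (𝕜 := ℂ) v).symm
      rw [h2, hcv, Complex.ofReal_re]
    have key1 : lamn * (c - c ^ 2) ≤ α - lam1 * c ^ 2 := by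
      have := hlow v
      rw [hvAv, hvv] at this
      exact this
    -- conclude
    have h3 : (lam1 * c + lamn * (1 - c)) * c ≤ θ1 * c := by nlinarith
    have h4 : lam1 * c + lamn * (1 - c) ≤ θ1 := le_of_mul_le_mul_right h3 hcpos
    nlinarith [h4]
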